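/- For every integer k ≥ 2 and every permutation w (a word whose letters are the distinct integers 1 through n), iDes(w) = iDes(φ^{(k)}(w)), where iDes(w) = {i : i appears to the left of i+1 in w} is the descent set of the inverse permutation. -/

import Mathlib

open scoped Classical

/-- `x` splits the pair `a`, `b` if `a ≤ x < b` or `b ≤ x < a`. -/
def Splits (x a b : ℕ) : Prop := (a ≤ x ∧ x < b) ∨ (b ≤ x ∧ x < a)

/-- `m ∈ Γ_j^{(k)}(w)`, where the word `w` is accessed with 1-based indices:
`j - k ∈ Γ_j^{(k)}(w)` when `w j` splits the pair `w (j-k), w (j-k+1)`, and for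
`i ∈ Γ_j^{(k)}(w)`, also `i - k ∈ Γ_j^{(k)}(w)` when exactly one of `w i`, `w (i+1)`
splits the pair `w (i-k), w (i-k+1)`. -/
def MemGamma (k : ℕ) (w : ℕ → ℕ) (j m : ℕ) : Prop :=
  1 ≤ m ∧ ∃ t : ℕ, m + (t + 1) * k = j ∧
    Splits (w j) (w (j - k)) (w (j - k + 1)) ∧
    ∀ s, 1 ≤ s → s ≤ t →
      Xor' (Splits (w (m + s * k)) (w (m + (s - 1) * k)) (w (m + (s - 1) * k + 1)))
           (Splits (w (m + s * k + 1)) (w (m + (s - 1) * k)) (w (m + (s - 1) * k + 1)))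

/-- The map `γ_j^{(k)}`: interchange `w i` and `w (i+1)` for every `i ∈ Γ_j^{(k)}(w)`. -/
noncomputable def gamW (k j : ℕ) (w : ℕ → ℕ) : ℕ → ℕ := fun p =>
  if MemGamma k w j p then w (p + 1)
  else if MemGamma k w j (p - 1) then w (p - 1)
  else w p

noncomputable def phiAux (k : ℕ) (w : ℕ → ℕ) : ℕ → ℕ → ℕ
  | 0 => w
  | j + 1 => gamW k (j + 1) (phiAux k w j)

/-- `φ^{(k)} = γ_n^{(k)} ∘ γ_{n-1}^{(k)} ∘ ⋯ ∘ γ_1^{(k)}` on words of length `n`. -/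
noncomputable def phiW (k n : ℕ) (w : ℕ → ℕ) : ℕ → ℕ := phiAux k w n

/-- 1-based access to the letters of a list word. -/
def wf (l : List ℕ) (i : ℕ) : ℕ := l.getD (i - 1) 0

/-- `φ^{(k)}` as an operation on list words. -/
noncomputable def phiL (k : ℕ) (l : List ℕ) : List ℕ :=
  List.ofFn (fun i : Fin l.length => phiW k l.length (wf l) (i.1 + 1))

/-- The `k`-descent set `Des_k(w) = {(i, i+k) : w i > w (i+k)}` of a word of length `n`,
recorded by its set of first components. -/
def DesKF (k n : ℕ) (w : ℕ → ℕ) : Finset ℕ :=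
  (Finset.Icc 1 n).filter fun i => i + k ≤ n ∧ w (i + k) < w i

/-- The `k`-inversion set `Inv_k(w) = {(i, j) : 0 < j - i < k and w i > w j}`. -/
def InvKF (k n : ℕ) (w : ℕ → ℕ) : Finset (ℕ × ℕ) :=
  ((Finset.Icc 1 n) ×ˢ (Finset.Icc 1 n)).filter fun p =>
    p.1 < p.2 ∧ p.2 - p.1 < k ∧ w p.2 < w p.1

/-- The `k`-major index `maj_k(w) = |Inv_k(w)| + Σ_{(i,i+k) ∈ Des_k(w)} i`. -/
def majKF (k n : ℕ) (w : ℕ → ℕ) : ℕ := (InvKF k n w).card + ∑ i ∈ DesKF k n w, i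

/-- The `k`-major index of a list word. -/
def majKL (k : ℕ) (l : List ℕ) : ℕ := majKF k l.length (wf l)

/-- The ordinary major index of a list word: the sum of the indices `i` with
`w i > w (i+1)`. -/
def majL (l : List ℕ) : ℕ :=
  ∑ i ∈ (Finset.Icc 1 l.length).filter (fun i => i + 1 ≤ l.length ∧ wf l (i + 1) < wf l i), i

/-- The ordinary inversion number of a list word: the number of pairs `i < j` with
`w i > w j`. -/
def invL (l : List ℕ) : ℕ :=
  (((Finset.Icc 1 l.length) ×ˢ (Finset.Icc 1 l.length)).filter fun p =>
    p.1 < p.2 ∧ wf l p.2 < wf l p.1).card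

/-- The inverse descent set of a permutation word:
`iDes(w) = {i : i appears to the left of i+1 in w}`. -/
def iDesL (l : List ℕ) : Set ℕ :=
  {i | i ∈ l ∧ (i + 1) ∈ l ∧ l.idxOf i < l.idxOf (i + 1)}

def Rfun (n : ℕ) (w : ℕ → ℕ) (i : ℕ) : Prop :=
  ∃ p q, 1 ≤ p ∧ p < q ∧ q ≤ n ∧ w p = i ∧ w q = i + 1

noncomputable def tauF (k : ℕ) (w : ℕ → ℕ) (j : ℕ) : ℕ → ℕ := fun p =>
  if MemGamma k w j p then p + 1
  else if MemGamma k w j (p - 1) then p - 1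
  else p

lemma memGamma_bounds {k j p : ℕ} {w : ℕ → ℕ} (h : MemGamma k w j p) :
    1 ≤ p ∧ p + k ≤ j := by
  obtain ⟨h1, t, ht, -⟩ := h
  refine ⟨h1, ?_⟩
  have : k ≤ (t + 1) * k := Nat.le_mul_of_pos_left k (by omega)
  omega

lemma memGamma_not_adj {k j p : ℕ} {w : ℕ → ℕ} (hk : 2 ≤ k)
    (h1 : MemGamma k w j p) (h2 : MemGamma k w j (p + 1)) : False := by
  obtain ⟨-, t, ht, -⟩ := h1
  obtain ⟨-, t', ht', -⟩ := h2
  have hmod : p % k = (p + 1) % k := by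
    have e1 : (p + (t + 1) * k) % k = p % k := Nat.add_mul_mod_self_right ..
    have e2 : ((p + 1) + (t' + 1) * k) % k = (p + 1) % k := Nat.add_mul_mod_self_right ..
    rw [ht] at e1; rw [ht'] at e2; omega
  have hdvd : k ∣ (p + 1) - p := (Nat.modEq_iff_dvd' (by omega)).mp hmod
  simp at hdvd
  omega

lemma gamW_eq_tau (k j : ℕ) (w : ℕ → ℕ) (p : ℕ) :
    gamW k j w p = w (tauF k w j p) := by
  unfold gamW tauF
  split_ifs <;> rfl

lemma tau_invol {k j : ℕ} {w : ℕ → ℕ} (hk : 2 ≤ k) (p : ℕ) :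
    tauF k w j (tauF k w j p) = p := by
  by_cases h1 : MemGamma k w j p
  · have h2 : ¬ MemGamma k w j (p + 1) := fun h => memGamma_not_adj hk h1 h
    simp [tauF, h1, h2]
  · by_cases h2 : MemGamma k w j (p - 1)
    · have hp : 2 ≤ p := by
        have := (memGamma_bounds h2).1
        omega
      have h3 : ¬ MemGamma k w j (p - 1 - 1) := by
        intro h
        have : p - 1 - 1 + 1 = p - 1 := by omega
        exact memGamma_not_adj hk h (this ▸ h2)
      have s1 : tauF k w j p = p - 1 := by simp [tauF, h1, h2]
      have s2 : tauF k w j (p - 1) = p - 1 + 1 := by simp [tauF, h2]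
      rw [s1, s2]
      omega
    · simp [tauF, h1, h2]

lemma tau_inj {k j : ℕ} {w : ℕ → ℕ} (hk : 2 ≤ k) :
    Function.Injective (tauF k w j) := by
  intro a b hab
  have := tau_invol (w := w) (j := j) hk a
  rw [hab, tau_invol hk b] at this
  exact this.symm

lemma tau_mem {k j n : ℕ} {w : ℕ → ℕ} (hk : 2 ≤ k) (hj : j ≤ n) {p : ℕ}
    (hp : p ∈ Set.Icc 1 n) : tauF k w j p ∈ Set.Icc 1 n := by
  obtain ⟨hp1, hp2⟩ := hp
  by_cases h1 : MemGamma k w j p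
  · have := memGamma_bounds h1
    simp only [tauF, h1, if_true]
    constructor <;> omega
  · by_cases h2 : MemGamma k w j (p - 1)
    · have := (memGamma_bounds h2).1
      simp only [tauF, h1, h2, if_false, if_true]
      constructor <;> omega
    · simp [tauF, h1, h2]; omega

lemma tau_bijOn {k j n : ℕ} {w : ℕ → ℕ} (hk : 2 ≤ k) (hj : j ≤ n) :
    Set.BijOn (tauF k w j) (Set.Icc 1 n) (Set.Icc 1 n) := by
  refine ⟨fun p hp => tau_mem hk hj hp, (tau_inj hk).injOn, fun v hv => ?_⟩
  exact ⟨tauF k w j v, tau_mem hk hj hv, tau_invol hk v⟩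

lemma spread {k j n p : ℕ} {w : ℕ → ℕ} (hk : 2 ≤ k) (hj : j ≤ n)
    (hw : Set.InjOn w (Set.Icc 1 n)) (h : MemGamma k w j p) :
    w (p + 1) + 2 ≤ w p ∨ w p + 2 ≤ w (p + 1) := by
  have hb := memGamma_bounds h
  obtain ⟨hp1, t, ht, hbase, hchain⟩ := h
  have hsplit : ∃ q0, q0 ≤ n ∧ p + 2 ≤ q0 ∧ Splits (w q0) (w p) (w (p + 1)) := by
    cases t with
    | zero =>
      refine ⟨j, hj, by omega, ?_⟩
      have hjk : j - k = p := by omega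
      rw [hjk] at hbase
      exact hbase
    | succ t' =>
      have hc := hchain 1 le_rfl (by omega)
      simp only [Nat.sub_self, zero_mul, add_zero, one_mul] at hc
      have hM : 2 * k ≤ (t' + 1 + 1) * k := Nat.mul_le_mul_right k (by omega)
      have hbnd : p + k + 1 ≤ n := by omega
      rcases hc with ⟨hA, -⟩ | ⟨hB, -⟩
      · exact ⟨p + k, by omega, by omega, hA⟩
      · exact ⟨p + k + 1, by omega, by omega, hB⟩
  obtain ⟨q0, hq0n, hq0p, hsp⟩ := hsplit
  have hpmem : p ∈ Set.Icc 1 n := ⟨hp1, by omega⟩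
  have hp1mem : p + 1 ∈ Set.Icc 1 n := ⟨by omega, by omega⟩
  have hq0mem : q0 ∈ Set.Icc 1 n := ⟨by omega, hq0n⟩
  have h1 : w q0 ≠ w p := fun he => by
    have := hw hq0mem hpmem he; omega
  have h2 : w q0 ≠ w (p + 1) := fun he => by
    have := hw hq0mem hp1mem he; omega
  rcases hsp with ⟨ha, hb'⟩ | ⟨ha, hb'⟩ <;> omega

lemma tau_order {k j n : ℕ} {w : ℕ → ℕ} (hk : 2 ≤ k) (hj : j ≤ n)
    (hw : Set.InjOn w (Set.Icc 1 n)) {p q : ℕ}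
    (hp : p ∈ Set.Icc 1 n) (hq : q ∈ Set.Icc 1 n)
    (hcons : w q = w p + 1 ∨ w p = w q + 1) (hpq : p < q) :
    tauF k w j p < tauF k w j q := by
  have hinj := tau_inj (w := w) (j := j) hk
  have hne : tauF k w j p ≠ tauF k w j q := fun he => by
    have := hinj he; omega
  by_cases hadj : q = p + 1
  · subst hadj
    have hnp : ¬ MemGamma k w j p := by
      intro h
      have := spread hk hj hw h
      omega
    have htp : tauF k w j p ≤ p := by
      by_cases h2 : MemGamma k w j (p - 1) <;> simp [tauF, hnp, h2]
    have htq : p + 1 ≤ tauF k w j (p + 1) := by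
      by_cases h1 : MemGamma k w j (p + 1)
      · simp [tauF, h1]
      · simp [tauF, h1, hnp]
    omega
  · -- q ≥ p + 2
    have hq2 : p + 2 ≤ q := by omega
    have htp : tauF k w j p ≤ p + 1 := by
      by_cases h1 : MemGamma k w j p
      · simp [tauF, h1]
      · by_cases h2 : MemGamma k w j (p - 1) <;> simp [tauF, h1, h2] <;> omega
    have htq : q - 1 ≤ tauF k w j q := by
      by_cases h1 : MemGamma k w j q
      · simp [tauF, h1]; omega
      · by_cases h2 : MemGamma k w j (q - 1) <;> simp [tauF, h1, h2] <;> omega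
    omega

lemma step_lemma {k j n : ℕ} {w : ℕ → ℕ} (hk : 2 ≤ k) (hj : j ≤ n)
    (hw : Set.BijOn w (Set.Icc 1 n) (Set.Icc 1 n)) :
    Set.BijOn (gamW k j w) (Set.Icc 1 n) (Set.Icc 1 n) ∧
      ∀ i, (Rfun n (gamW k j w) i ↔ Rfun n w i) := by
  have hwinj := hw.injOn
  constructor
  · exact (hw.comp (tau_bijOn hk hj)).congr
      (fun p _ => (gamW_eq_tau k j w p).symm)
  · intro i
    constructor
    · rintro ⟨p, q, h1, h2, h3, h4, h5⟩
      rw [gamW_eq_tau] at h4 h5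
      set p' := tauF k w j p with hp'
      set q' := tauF k w j q with hq'
      have hpmem : p ∈ Set.Icc 1 n := ⟨h1, by omega⟩
      have hqmem : q ∈ Set.Icc 1 n := ⟨by omega, h3⟩
      have hp'mem : p' ∈ Set.Icc 1 n := tau_mem hk hj hpmem
      have hq'mem : q' ∈ Set.Icc 1 n := tau_mem hk hj hqmem
      have hcons : w q' = w p' + 1 ∨ w p' = w q' + 1 := Or.inl (by omega)
      have hlt : p' < q' := by
        rcases lt_trichotomy p' q' with h | h | h
        · exact h
        · exfalso; rw [h, h5] at h4; omega
        · exfalso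
          have := tau_order hk hj hwinj hq'mem hp'mem (Or.inr (by omega)) h
          rw [hq', hp', tau_invol hk, tau_invol hk] at this
          omega
      exact ⟨p', q', hp'mem.1, hlt, hq'mem.2, h4, h5⟩
    · rintro ⟨p, q, h1, h2, h3, h4, h5⟩
      have hpmem : p ∈ Set.Icc 1 n := ⟨h1, by omega⟩
      have hqmem : q ∈ Set.Icc 1 n := ⟨by omega, h3⟩
      have hlt : tauF k w j p < tauF k w j q :=
        tau_order hk hj hwinj hpmem hqmem (Or.inl (by omega)) h2
      have hp'mem := tau_mem (k := k) (w := w) hk hj hpmem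
      have hq'mem := tau_mem (k := k) (w := w) hk hj hqmem
      refine ⟨tauF k w j p, tauF k w j q, hp'mem.1, hlt, hq'mem.2, ?_, ?_⟩
      · rw [gamW_eq_tau, tau_invol hk, h4]
      · rw [gamW_eq_tau, tau_invol hk, h5]

lemma phiAux_inv {k n : ℕ} (hk : 2 ≤ k) {w0 : ℕ → ℕ}
    (hw0 : Set.BijOn w0 (Set.Icc 1 n) (Set.Icc 1 n)) :
    ∀ j, j ≤ n →
      Set.BijOn (phiAux k w0 j) (Set.Icc 1 n) (Set.Icc 1 n) ∧
        ∀ i, (Rfun n (phiAux k w0 j) i ↔ Rfun n w0 i) := by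
  intro j
  induction j with
  | zero => exact fun _ => ⟨hw0, fun i => Iff.rfl⟩
  | succ j ih =>
    intro hj
    obtain ⟨hb, hr⟩ := ih (by omega)
    obtain ⟨hb', hr'⟩ := step_lemma hk hj hb
    exact ⟨hb', fun i => (hr' i).trans (hr i)⟩

lemma wf_getElem {l : List ℕ} {p : ℕ} (h : p - 1 < l.length) : wf l p = l[p - 1] :=
  List.getD_eq_getElem l 0 h

lemma iDes_char {m : List ℕ} (hm : m.Nodup) :
    iDesL m = {i | Rfun m.length (wf m) i} := by
  ext i
  constructor
  · rintro ⟨hi, hi1, hlt⟩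
    have h1 : m.idxOf i < m.length := List.idxOf_lt_length_iff.mpr hi
    have h2 : m.idxOf (i + 1) < m.length := List.idxOf_lt_length_iff.mpr hi1
    refine ⟨m.idxOf i + 1, m.idxOf (i + 1) + 1, by omega, by omega, by omega, ?_, ?_⟩
    · rw [wf_getElem (by omega)]
      simp only [Nat.add_sub_cancel]
      exact List.getElem_idxOf h1
    · rw [wf_getElem (by omega)]
      simp only [Nat.add_sub_cancel]
      exact List.getElem_idxOf h2
  · rintro ⟨p, q, h1, h2, h3, h4, h5⟩
    rw [wf_getElem (by omega)] at h4
    rw [wf_getElem (by omega)] at h5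
    have hi : i ∈ m := h4 ▸ List.getElem_mem _
    have hi1 : i + 1 ∈ m := h5 ▸ List.getElem_mem _
    have hidx1 : m.idxOf i < m.length := List.idxOf_lt_length_iff.mpr hi
    have hidx2 : m.idxOf (i + 1) < m.length := List.idxOf_lt_length_iff.mpr hi1
    have e1 : m.idxOf i = p - 1 :=
      (hm.getElem_inj_iff).mp (by rw [List.getElem_idxOf hidx1, h4])
    have e2 : m.idxOf (i + 1) = q - 1 :=
      (hm.getElem_inj_iff).mp (by rw [List.getElem_idxOf hidx2, h5])
    exact ⟨hi, hi1, by omega⟩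

lemma Rfun_congr {n : ℕ} {w w' : ℕ → ℕ} (h : ∀ p, 1 ≤ p → p ≤ n → w p = w' p) (i : ℕ) :
    Rfun n w i ↔ Rfun n w' i := by
  constructor <;> rintro ⟨p, q, h1, h2, h3, h4, h5⟩ <;>
    exact ⟨p, q, h1, h2, h3, by rw [← h4, h p h1 (by omega)] , by rw [← h5, h q (by omega) h3]⟩

/-- For every `k ≥ 2` and every permutation `w` of `1, …, n`,
`iDes(w) = iDes(φ^{(k)}(w))`. -/
theorem phi_preserves_iDes (k n : ℕ) (hk : 2 ≤ k) (l : List ℕ)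
    (hl : l.Perm (List.range' 1 n)) :
    iDesL l = iDesL (phiL k l) := by
  have hlen : l.length = n := by rw [hl.length_eq, List.length_range']
  subst hlen
  set N := l.length with hN
  have hnd : l.Nodup := (hl.nodup_iff).mpr List.nodup_range'
  have hmem : ∀ x, x ∈ l ↔ 1 ≤ x ∧ x ≤ N := by
    intro x; rw [hl.mem_iff, List.mem_range'_1]; omega
  have hbij : Set.BijOn (wf l) (Set.Icc 1 N) (Set.Icc 1 N) := by
    refine ⟨?_, ?_, ?_⟩
    · intro p hp
      obtain ⟨hp1, hp2⟩ := hp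
      rw [Set.mem_Icc, wf_getElem (show p - 1 < N by omega)]
      exact (hmem _).mp (List.getElem_mem _)
    · intro p hp q hq he
      obtain ⟨hp1, hp2⟩ := hp
      obtain ⟨hq1, hq2⟩ := hq
      rw [wf_getElem (show p - 1 < N by omega),
          wf_getElem (show q - 1 < N by omega)] at he
      have := (hnd.getElem_inj_iff).mp he
      omega
    · intro v hv
      obtain ⟨hv1, hv2⟩ := hv
      obtain ⟨idx, hidx, hget⟩ := List.mem_iff_getElem.mp ((hmem v).mpr ⟨hv1, hv2⟩)
      refine ⟨idx + 1, ⟨by omega, by omega⟩, ?_⟩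
      rw [wf_getElem (show idx + 1 - 1 < N by omega)]
      simpa using hget
  obtain ⟨hbijN, hrN⟩ := phiAux_inv hk hbij N le_rfl
  have hlen' : (phiL k l).length = N := by simp [phiL, hN]
  have hnd' : (phiL k l).Nodup := by
    rw [phiL, List.nodup_ofFn]
    intro a b hab
    have ha : (a : ℕ) + 1 ∈ Set.Icc 1 N := ⟨by omega, by omega⟩
    have hb : (b : ℕ) + 1 ∈ Set.Icc 1 N := ⟨by omega, by omega⟩
    have := hbijN.injOn ha hb hab
    exact Fin.ext (by omega)
  have hagree : ∀ p, 1 ≤ p → p ≤ N → phiAux k (wf l) N p = wf (phiL k l) p := by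
    intro p hp1 hp2
    rw [wf_getElem (show p - 1 < (phiL k l).length by omega)]
    simp only [phiL]
    rw [List.getElem_ofFn]
    show _ = phiW k N (wf l) (p - 1 + 1)
    rw [phiW]
    congr 1
    omega
  rw [iDes_char hnd, iDes_char hnd']
  ext i
  simp only [Set.mem_setOf_eq, hlen']
  exact ((hrN i).symm).trans (Rfun_congr hagree i)
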